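/- For every T ≥ 1, every π ∈ Π and every λ ∈ Λ, L(π̂_T, λ) ≥ L(π, λ̂_T) − R_T/T, where π̂_T = (1/T) Σ_{t=1}^T π_t and λ̂_T = (1/T) Σ_{t=1}^T λ_t. Consequently, in the extended reals, sup_{π∈Π} L(π, λ̂_T) − inf_{λ∈Λ} L(π̂_T, λ) ≤ R_T/T, i.e. the duality gap of the averaged iterates is at most R_T/T. -/

import Mathlib

/-- An affine function on a convex set preserves finite convex combinations. -/
lemma affine_map_sum {ι : Type*} [DecidableEq ι] {V : Type*} [AddCommGroup V] [Module ℝ V]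
    (S : Set V) (hS : Convex ℝ S) (f : V → ℝ)
    (hf : ∀ c : ℝ, 0 ≤ c → c ≤ 1 → ∀ p ∈ S, ∀ q ∈ S,
      f (c • p + (1 - c) • q) = c * f p + (1 - c) * f q) :
    ∀ (s : Finset ι) (w : ι → ℝ) (z : ι → V), (∀ i ∈ s, 0 ≤ w i) →
      (∑ i ∈ s, w i = 1) → (∀ i ∈ s, z i ∈ S) →
      f (∑ i ∈ s, w i • z i) = ∑ i ∈ s, w i * f (z i) := by
  intro s
  induction s using Finset.induction_on with
  | empty => intro w z hw hw1 hz; simp at hw1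
  | insert _ _ hi ih =>
    rename_i i s
    intro w z hw hw1 hz
    rw [Finset.sum_insert hi] at hw1 ⊢
    rw [Finset.sum_insert hi]
    set Wr : ℝ := ∑ j ∈ s, w j with hWr
    have hWr0 : 0 ≤ Wr := Finset.sum_nonneg fun j hj => hw j (Finset.mem_insert_of_mem hj)
    rcases eq_or_lt_of_le hWr0 with hW0 | hWpos
    · -- all remaining weights are zero
      have hall : ∀ j ∈ s, w j = 0 := by
        intro j hj
        have := (Finset.sum_eq_zero_iff_of_nonneg
          (fun j hj => hw j (Finset.mem_insert_of_mem hj))).1 hW0.symm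
        exact this j hj
      have hwi : w i = 1 := by rw [← hW0] at hw1; linarith
      have h1 : ∑ j ∈ s, w j • z j = 0 := Finset.sum_eq_zero fun j hj => by
        rw [hall j hj, zero_smul]
      have h2 : ∑ j ∈ s, w j * f (z j) = 0 := Finset.sum_eq_zero fun j hj => by
        rw [hall j hj, zero_mul]
      rw [h1, h2, hwi]; simp
    · have hwi1 : w i ≤ 1 := by linarith
      have hwi0 : 0 ≤ w i := hw i (Finset.mem_insert_self i s)
      set q : V := ∑ j ∈ s, (w j / Wr) • z j with hq
      have hwsum : ∑ j ∈ s, w j / Wr = 1 := by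
        rw [← Finset.sum_div, ← hWr, div_self hWpos.ne']
      have hwnn : ∀ j ∈ s, 0 ≤ w j / Wr := fun j hj =>
        div_nonneg (hw j (Finset.mem_insert_of_mem hj)) hWr0
      have hzmem : ∀ j ∈ s, z j ∈ S := fun j hj => hz j (Finset.mem_insert_of_mem hj)
      have hqS : q ∈ S := hS.sum_mem hwnn hwsum hzmem
      have h1mc : (1 : ℝ) - w i = Wr := by linarith
      have hsmul : (1 - w i) • q = ∑ j ∈ s, w j • z j := by
        rw [h1mc, hq, Finset.smul_sum]
        refine Finset.sum_congr rfl fun j hj => ?_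
        rw [smul_smul, mul_div_cancel₀ _ hWpos.ne']
      have key := hf (w i) hwi0 hwi1 (z i) (hz i (Finset.mem_insert_self i s)) q hqS
      rw [hsmul] at key
      rw [key, ih (fun j => w j / Wr) z hwnn hwsum hzmem, h1mc, Finset.mul_sum]
      congr 1
      refine Finset.sum_congr rfl fun j hj => ?_
      rw [← mul_assoc, mul_div_cancel₀ _ hWpos.ne']

/-- Convergence guarantee of the meta algorithm (Proposition 2):
the averaged iterates of the best-response / no-regret repeated game have duality
gap at most `R/T`. -/
theorem meta_algorithm_duality_gap
    {V W : Type*} [AddCommGroup V] [Module ℝ V] [AddCommGroup W] [Module ℝ W]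
    (Pi : Set V) (Lam : Set W) (hPi : Convex ℝ Pi) (hLam : Convex ℝ Lam)
    (L : V → W → ℝ)
    (haff1 : ∀ c : ℝ, 0 ≤ c → c ≤ 1 → ∀ p ∈ Pi, ∀ p' ∈ Pi, ∀ l ∈ Lam,
      L (c • p + (1 - c) • p') l = c * L p l + (1 - c) * L p' l)
    (haff2 : ∀ c : ℝ, 0 ≤ c → c ≤ 1 → ∀ p ∈ Pi, ∀ l ∈ Lam, ∀ l' ∈ Lam,
      L p (c • l + (1 - c) • l') = c * L p l + (1 - c) * L p l')
    (T : ℕ) (hT : 1 ≤ T)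
    (π : ℕ → V) (lam : ℕ → W)
    (hπ : ∀ t, π t ∈ Pi) (hlam : ∀ t, lam t ∈ Lam)
    (hbest : ∀ t ∈ Finset.Icc 1 T, ∀ p ∈ Pi, L p (lam t) ≤ L (π t) (lam t))
    (R : ℝ) (hR : 0 ≤ R)
    (hnoregret : ∀ l ∈ Lam,
      ∑ t ∈ Finset.Icc 1 T, L (π t) (lam t) ≤ (∑ t ∈ Finset.Icc 1 T, L (π t) l) + R)
    (πhat : V) (lamhat : W)
    (hπhat : πhat = (T : ℝ)⁻¹ • ∑ t ∈ Finset.Icc 1 T, π t)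
    (hlamhat : lamhat = (T : ℝ)⁻¹ • ∑ t ∈ Finset.Icc 1 T, lam t) :
    (∀ p ∈ Pi, ∀ l ∈ Lam, L p lamhat - R / T ≤ L πhat l) ∧
    (⨆ p ∈ Pi, ((L p lamhat : ℝ) : EReal)) - (⨅ l ∈ Lam, ((L πhat l : ℝ) : EReal))
      ≤ ((R / T : ℝ) : EReal) := by
  have hT0 : (0 : ℝ) < (T : ℝ) := by exact_mod_cast hT
  have hTne : (T : ℝ) ≠ 0 := hT0.ne'
  have hwnn : ∀ t ∈ Finset.Icc 1 T, 0 ≤ (T : ℝ)⁻¹ := fun _ _ => by positivity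
  have hwsum : ∑ t ∈ Finset.Icc 1 T, (T : ℝ)⁻¹ = 1 := by
    rw [Finset.sum_const, Nat.card_Icc]
    simp [hTne]
  have hπhat' : πhat = ∑ t ∈ Finset.Icc 1 T, (T : ℝ)⁻¹ • π t := by
    rw [hπhat, Finset.smul_sum]
  have hlamhat' : lamhat = ∑ t ∈ Finset.Icc 1 T, (T : ℝ)⁻¹ • lam t := by
    rw [hlamhat, Finset.smul_sum]
  have hπmem : πhat ∈ Pi := hπhat' ▸ hPi.sum_mem hwnn hwsum (fun t _ => hπ t)
  have hlmem : lamhat ∈ Lam := hlamhat' ▸ hLam.sum_mem hwnn hwsum (fun t _ => hlam t)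
  -- main inequality
  have part1 : ∀ p ∈ Pi, ∀ l ∈ Lam, L p lamhat - R / T ≤ L πhat l := by
    intro p hp l hl
    have e1 : L p lamhat = ∑ t ∈ Finset.Icc 1 T, (T : ℝ)⁻¹ * L p (lam t) := by
      rw [hlamhat']
      exact affine_map_sum Lam hLam (L p)
        (fun c hc0 hc1 q hq q' hq' => haff2 c hc0 hc1 p hp q hq q' hq')
        _ _ _ hwnn hwsum (fun t _ => hlam t)
    have e2 : L πhat l = ∑ t ∈ Finset.Icc 1 T, (T : ℝ)⁻¹ * L (π t) l := by
      rw [hπhat']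
      exact affine_map_sum Pi hPi (fun v => L v l)
        (fun c hc0 hc1 q hq q' hq' => haff1 c hc0 hc1 q hq q' hq' l hl)
        _ _ _ hwnn hwsum (fun t _ => hπ t)
    have h3 : ∑ t ∈ Finset.Icc 1 T, L p (lam t) ≤
        ∑ t ∈ Finset.Icc 1 T, L (π t) (lam t) :=
      Finset.sum_le_sum fun t ht => hbest t ht p hp
    have h4 := hnoregret l hl
    rw [e1, e2, ← Finset.mul_sum, ← Finset.mul_sum]
    have h5 : (T : ℝ)⁻¹ * (∑ t ∈ Finset.Icc 1 T, L p (lam t)) ≤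
        (T : ℝ)⁻¹ * ((∑ t ∈ Finset.Icc 1 T, L (π t) l) + R) :=
      mul_le_mul_of_nonneg_left (h3.trans h4) (by positivity)
    rw [mul_add] at h5
    have hinv : (T : ℝ)⁻¹ * R = R / T := by ring
    linarith
  refine ⟨part1, ?_⟩
  set I : EReal := ⨅ l ∈ Lam, ((L πhat l : ℝ) : EReal) with hI
  have hIlb : ∀ p ∈ Pi, ((L p lamhat - R / T : ℝ) : EReal) ≤ I := by
    intro p hp
    exact le_iInf₂ fun l hl => EReal.coe_le_coe_iff.2 (part1 p hp l hl)
  have hIub : I ≤ ((L πhat lamhat : ℝ) : EReal) := iInf₂_le lamhat hlmem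
  have hIbot : I ≠ ⊥ := fun h => by
    have := hIlb πhat hπmem
    rw [h] at this
    exact (EReal.coe_ne_bot _) (le_bot_iff.1 this)
  have hItop : I ≠ ⊤ := fun h => by
    rw [h] at hIub
    exact (EReal.coe_ne_top _) (top_le_iff.1 hIub)
  lift I to ℝ using ⟨hItop, hIbot⟩ with r hr
  have hsup : (⨆ p ∈ Pi, ((L p lamhat : ℝ) : EReal)) ≤ ((R / T + r : ℝ) : EReal) := by
    refine iSup₂_le fun p hp => ?_
    have := EReal.coe_le_coe_iff.1 (hIlb p hp)
    exact EReal.coe_le_coe_iff.2 (by linarith)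
  calc (⨆ p ∈ Pi, ((L p lamhat : ℝ) : EReal)) - ((r : ℝ) : EReal)
      ≤ ((R / T + r : ℝ) : EReal) - ((r : ℝ) : EReal) :=
        EReal.sub_le_sub hsup le_rfl
    _ = ((R / T : ℝ) : EReal) := by rw [← EReal.coe_sub]; norm_num
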